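/- Let L be the out-Laplacian of an SCWB digraph on N ≥ 2 nodes, let β > 0 and γ ≥ 0. Let r : [0,∞) → ℝ^N be differentiable with ‖Π_N r′(t)‖ ≤ γ for all t ≥ 0, and let x : [0,∞) → ℝ^N be differentiable and satisfy x′(t) = −β L x(t) + r′(t) for all t ≥ 0 together with the initialization 1_Nᵀ (x(0) − r(0)) = 0. Then the tracking-error trajectory t ↦ x(t) − (1/N)(Σ_{j=1}^N r_j(t)) 1_N is bounded on [0,∞), and for every node i, limsup_{t→∞} | x_i(t) − (1/N) Σ_{j=1}^N r_j(t) | ≤ γ/(β λ̂₂). -/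

import Mathlib

open Matrix Filter

/-- `A` is a nonnegative weighted adjacency matrix with zero diagonal. -/
def IsAdjacencyMatrix {N : ℕ} (A : Matrix (Fin N) (Fin N) ℝ) : Prop :=
  (∀ i j, 0 ≤ A i j) ∧ ∀ i, A i i = 0

/-- `L` is the out-Laplacian of the weighted digraph with adjacency matrix `A`:
`L i i = ∑ j, A i j` and `L i j = -A i j` for `i ≠ j`. -/
def IsOutLaplacian {N : ℕ} (A L : Matrix (Fin N) (Fin N) ℝ) : Prop :=
  (∀ i, L i i = ∑ j, A i j) ∧ ∀ i j, i ≠ j → L i j = -A i j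

/-- Strong connectivity: there is a directed edge from `u` to `v` iff `A v u > 0`, and any
ordered pair of distinct nodes is joined by a directed path. -/
def IsStronglyConnected {N : ℕ} (A : Matrix (Fin N) (Fin N) ℝ) : Prop :=
  ∀ i j : Fin N, i ≠ j → Relation.TransGen (fun u v => 0 < A v u) i j

/-- Weight-balanced: the column sums of the out-Laplacian vanish, i.e. `1ᵀ L = 0`. -/
def IsWeightBalanced {N : ℕ} (L : Matrix (Fin N) (Fin N) ℝ) : Prop :=
  ∀ j, ∑ i, L i j = 0

/-- The all-ones vector `1_N`. -/
noncomputable def ones (N : ℕ) : EuclideanSpace ℝ (Fin N) := WithLp.toLp 2 (fun _ => 1)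

/-- The average `(1/N) ∑ j v j` of the entries of a vector. -/
noncomputable def avg {N : ℕ} (v : EuclideanSpace ℝ (Fin N)) : ℝ := (∑ j, v j) / N

/-- The projection `Π_N v = v - avg(v) • 1_N` onto the orthogonal complement of `1_N`. -/
noncomputable def proj {N : ℕ} (v : EuclideanSpace ℝ (Fin N)) : EuclideanSpace ℝ (Fin N) :=
  v - avg v • ones N

/- ----------------------------------------------------------------
   Auxiliary lemmas
---------------------------------------------------------------- -/

lemma lap_entry {N : ℕ} {A L : Matrix (Fin N) (Fin N) ℝ} (hA : IsAdjacencyMatrix A)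
    (hL : IsOutLaplacian A L) (i j : Fin N) :
    L i j = (if i = j then ∑ k, A i k else 0) - A i j := by
  by_cases h : i = j
  · subst h; simp [hL.1 i, hA.2 i]
  · simp [h, hL.2 i j h]

lemma col_sum {N : ℕ} {A L : Matrix (Fin N) (Fin N) ℝ} (hA : IsAdjacencyMatrix A)
    (hL : IsOutLaplacian A L) (hWB : IsWeightBalanced L) (j : Fin N) :
    ∑ i, A i j = ∑ k, A j k := by
  have h0 := hWB j
  have h1 : ∑ i, L i j = (∑ k, A j k) - ∑ i, A i j := by
    simp only [fun i => lap_entry hA hL i j]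
    rw [Finset.sum_sub_distrib]
    congr 1
    rw [Finset.sum_ite_eq' Finset.univ j (fun i => ∑ k, A i k)]
    simp
  rw [h0] at h1
  linarith

lemma euclid_inner {N : ℕ} (u w : EuclideanSpace ℝ (Fin N)) :
    (inner ℝ u w : ℝ) = ∑ i, u i * w i := by
  simp [PiLp.inner_apply, RCLike.inner_apply, conj_trivial]
  exact Finset.sum_congr rfl fun i _ => mul_comm _ _

lemma lap_quad {N : ℕ} {A L : Matrix (Fin N) (Fin N) ℝ} (hA : IsAdjacencyMatrix A)
    (hL : IsOutLaplacian A L) (hWB : IsWeightBalanced L) (v : Fin N → ℝ) :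
    2 * (∑ i, v i * (L *ᵥ v) i) = ∑ i, ∑ j, A i j * (v i - v j) ^ 2 := by
  have key : ∀ i, v i * (L *ᵥ v) i
      = (∑ k, A i k) * v i ^ 2 - ∑ j, A i j * (v i * v j) := by
    intro i
    have h1 : v i * (L *ᵥ v) i = ∑ j, v i * (L i j * v j) := by
      simp [Matrix.mulVec, dotProduct, Finset.mul_sum]
    rw [h1]
    have h2 : ∀ j, v i * (L i j * v j)
        = (if i = j then (∑ k, A i k) * (v i * v j) else 0) - A i j * (v i * v j) := by
      intro j; rw [lap_entry hA hL]; split_ifs <;> ring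
    simp only [h2, Finset.sum_sub_distrib, Finset.sum_ite_eq, Finset.mem_univ, if_true]
    ring
  have hRHS : ∑ i, ∑ j, A i j * (v i - v j) ^ 2
      = (∑ i, (∑ k, A i k) * v i ^ 2) + (∑ i, (∑ k, A i k) * v i ^ 2)
        - 2 * ∑ i, ∑ j, A i j * (v i * v j) := by
    have e1 : ∀ i j, A i j * (v i - v j) ^ 2
        = A i j * v i ^ 2 + A i j * v j ^ 2 - 2 * (A i j * (v i * v j)) := by
      intro i j; ring
    simp only [e1, Finset.sum_sub_distrib, Finset.sum_add_distrib, ← Finset.mul_sum]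
    have hfirst : ∀ i, ∑ j, A i j * v i ^ 2 = (∑ k, A i k) * v i ^ 2 := by
      intro i; rw [← Finset.sum_mul]
    have hsecond : ∑ i, ∑ j, A i j * v j ^ 2 = ∑ i, (∑ k, A i k) * v i ^ 2 := by
      rw [Finset.sum_comm]
      refine Finset.sum_congr rfl fun j _ => ?_
      rw [← Finset.sum_mul, col_sum hA hL hWB j]
    rw [Finset.sum_congr rfl fun i _ => hfirst i, hsecond]
  simp only [key, Finset.sum_sub_distrib]
  rw [hRHS]
  ring

lemma lap_quad_nonneg {N : ℕ} {A L : Matrix (Fin N) (Fin N) ℝ} (hA : IsAdjacencyMatrix A)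
    (hL : IsOutLaplacian A L) (hWB : IsWeightBalanced L) (v : Fin N → ℝ) :
    0 ≤ ∑ i, v i * (L *ᵥ v) i := by
  have h := lap_quad hA hL hWB v
  have h2 : 0 ≤ ∑ i, ∑ j, A i j * (v i - v j) ^ 2 :=
    Finset.sum_nonneg fun i _ => Finset.sum_nonneg fun j _ =>
      mul_nonneg (hA.1 i j) (sq_nonneg _)
  linarith

lemma lap_const {N : ℕ} {A L : Matrix (Fin N) (Fin N) ℝ} (hA : IsAdjacencyMatrix A)
    (hL : IsOutLaplacian A L) (hSC : IsStronglyConnected A) (hWB : IsWeightBalanced L)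
    (v : Fin N → ℝ) (h : ∑ i, v i * (L *ᵥ v) i = 0) : ∀ i j, v i = v j := by
  have h2 : ∑ i, ∑ j, A i j * (v i - v j) ^ 2 = 0 := by
    rw [← lap_quad hA hL hWB v, h]; ring
  have hterm : ∀ i j, A i j * (v i - v j) ^ 2 = 0 := by
    have h3 := (Finset.sum_eq_zero_iff_of_nonneg (fun i _ =>
      Finset.sum_nonneg fun j _ => mul_nonneg (hA.1 i j) (sq_nonneg _))).mp h2
    intro i j
    exact (Finset.sum_eq_zero_iff_of_nonneg (fun j _ =>
      mul_nonneg (hA.1 i j) (sq_nonneg _))).mp (h3 i (Finset.mem_univ i)) j (Finset.mem_univ j)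
  have hedge : ∀ i j : Fin N, 0 < A j i → v i = v j := by
    intro i j hij
    have h4 := hterm j i
    rcases mul_eq_zero.mp h4 with h5 | h5
    · exact absurd h5 (ne_of_gt hij)
    · have h6 : v j - v i = 0 := by
        have := pow_eq_zero_iff (n := 2) (by norm_num) |>.mp h5
        exact this
      linarith
  have hpath : ∀ {a b : Fin N}, Relation.TransGen (fun u w => 0 < A w u) a b → v a = v b := by
    intro a b h
    induction h with
    | single h => exact hedge _ _ h
    | tail _ h ih => exact ih.trans (hedge _ _ h)
  intro i j
  by_cases hij : i = j
  · rw [hij]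
  · exact hpath (hSC i j hij)

lemma spectral_key {N : ℕ} (hN : 2 ≤ N) (A L : Matrix (Fin N) (Fin N) ℝ)
    (hA : IsAdjacencyMatrix A) (hL : IsOutLaplacian A L)
    (hSC : IsStronglyConnected A) (hWB : IsWeightBalanced L)
    (lam2 : ℝ)
    (hlam2 : IsLeast {μ : ℝ | μ ≠ 0 ∧ μ ∈ spectrum ℝ ((2:ℝ)⁻¹ • (L + Lᵀ))} lam2) :
    0 < lam2 ∧ ∀ v : EuclideanSpace ℝ (Fin N), (∑ i, v i = 0) →
      lam2 * (∑ i, v i * v i) ≤ ∑ i, v i * (L *ᵥ v) i := by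
  set S : Matrix (Fin N) (Fin N) ℝ := (2:ℝ)⁻¹ • (L + Lᵀ) with hSdef
  have hS : S.IsHermitian := by
    show Sᴴ = S
    ext i j
    simp [hSdef, Matrix.conjTranspose_apply, Matrix.smul_apply, Matrix.add_apply,
      Matrix.transpose_apply]
    ring
  have hSsymm : ∀ i j, S i j = S j i := by
    intro i j
    have := hS.apply j i
    simpa using this
  have hsym : ∀ w : Fin N → ℝ, ∑ i, w i * (S *ᵥ w) i = ∑ i, w i * (L *ᵥ w) i := by
    intro w
    have hswap : ∑ i, w i * ∑ j, L j i * w j = ∑ i, w i * ∑ j, L i j * w j := by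
      simp only [Finset.mul_sum]
      rw [Finset.sum_comm]
      exact Finset.sum_congr rfl fun i _ => Finset.sum_congr rfl fun j _ => by ring
    have h1 : ∀ i, w i * (S *ᵥ w) i = ∑ j, w i * (S i j * w j) := by
      intro i; simp [Matrix.mulVec, dotProduct, Finset.mul_sum]
    have h2 : ∀ i, w i * (L *ᵥ w) i = ∑ j, w i * (L i j * w j) := by
      intro i; simp [Matrix.mulVec, dotProduct, Finset.mul_sum]
    simp only [h1, h2]
    have h3 : ∀ i j, w i * (S i j * w j)
        = 2⁻¹ * (w i * (L i j * w j)) + 2⁻¹ * (w i * (L j i * w j)) := by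
      intro i j
      simp [hSdef, Matrix.smul_apply, Matrix.add_apply, Matrix.transpose_apply]
      ring
    simp only [h3, Finset.sum_add_distrib, ← Finset.mul_sum]
    rw [hswap]
    ring
  have hspec_of_eig : ∀ (μ : ℝ) (w : Fin N → ℝ), w ≠ 0 → S *ᵥ w = μ • w →
      μ ∈ spectrum ℝ S := by
    intro μ w hw hsw
    have h1 : Module.End.HasEigenvalue (Matrix.toLinAlgEquiv' S :
        Module.End ℝ (Fin N → ℝ)) μ := by
      apply Module.End.hasEigenvalue_of_hasEigenvector (x := w)
      refine ⟨Module.End.mem_eigenspace_iff.mpr ?_, hw⟩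
      simpa [Matrix.toLinAlgEquiv'_apply] using hsw
    have h2 := Module.End.hasEigenvalue_iff_mem_spectrum.mp h1
    rwa [AlgEquiv.spectrum_eq (Matrix.toLinAlgEquiv' (R := ℝ) (n := Fin N)) S] at h2
  have hkernel : ∀ w : Fin N → ℝ, S *ᵥ w = 0 → ∀ i j, w i = w j := by
    intro w hw
    apply lap_const hA hL hSC hWB
    rw [← hsym w, hw]
    simp
  obtain ⟨⟨hne, hmem⟩, hlb⟩ := hlam2
  -- positivity of lam2
  have hmem' : Module.End.HasEigenvalue (Matrix.toLinAlgEquiv' S :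
      Module.End ℝ (Fin N → ℝ)) lam2 := by
    rw [Module.End.hasEigenvalue_iff_mem_spectrum,
      AlgEquiv.spectrum_eq (Matrix.toLinAlgEquiv' (R := ℝ) (n := Fin N)) S]
    exact hmem
  obtain ⟨w, hw1, hw0⟩ := hmem'.exists_hasEigenvector
  have hsw : S *ᵥ w = lam2 • w := by
    have := Module.End.mem_eigenspace_iff.mp hw1
    simpa [Matrix.toLinAlgEquiv'_apply] using this
  have h1 : ∑ i, w i * (S *ᵥ w) i = lam2 * ∑ i, w i * w i := by
    rw [hsw, Finset.mul_sum]
    exact Finset.sum_congr rfl fun i _ => by simp [Pi.smul_apply, smul_eq_mul]; ring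
  have hwpos : 0 < ∑ i, w i * w i := by
    obtain ⟨i0, hi0⟩ := Function.ne_iff.mp hw0
    refine Finset.sum_pos' (fun i _ => mul_self_nonneg _) ⟨i0, Finset.mem_univ _, ?_⟩
    exact mul_self_pos.mpr (by simpa using hi0)
  have hpform : 0 ≤ lam2 * ∑ i, w i * w i := by
    rw [← h1, hsym w]; exact lap_quad_nonneg hA hL hWB w
  have hlam2nonneg : 0 ≤ lam2 := by nlinarith
  have hlam2pos : 0 < lam2 := lt_of_le_of_ne hlam2nonneg (Ne.symm hne)
  refine ⟨hlam2pos, ?_⟩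
  intro v hv
  set B := hS.eigenvectorBasis with hB
  set μ := hS.eigenvalues with hμ
  have hBev : ∀ i, S *ᵥ (B i : EuclideanSpace ℝ (Fin N)) = μ i • (B i : EuclideanSpace ℝ (Fin N)) :=
    fun i => hS.mulVec_eigenvectorBasis i
  set c : Fin N → ℝ := fun i => ∑ k, (B i : EuclideanSpace ℝ (Fin N)) k * v k with hc
  have hswapS : ∀ u w : EuclideanSpace ℝ (Fin N),
      ∑ i, u i * (S *ᵥ (w : Fin N → ℝ)) i = ∑ i, (S *ᵥ (u : Fin N → ℝ)) i * w i := by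
    intro u w
    have h1 : ∑ i, u i * (S *ᵥ (w : Fin N → ℝ)) i = ∑ i, ∑ j, u i * (S i j * w j) := by
      refine Finset.sum_congr rfl fun i _ => ?_
      simp [Matrix.mulVec, dotProduct, Finset.mul_sum]
    have h2 : ∑ i, (S *ᵥ (u : Fin N → ℝ)) i * w i = ∑ i, ∑ j, (S i j * u j) * w i := by
      refine Finset.sum_congr rfl fun i _ => ?_
      simp [Matrix.mulVec, dotProduct, Finset.sum_mul]
    rw [h1, h2, Finset.sum_comm]
    refine Finset.sum_congr rfl fun i _ => Finset.sum_congr rfl fun j _ => ?_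
    rw [hSsymm j i]; ring
  have hParF1 : ∑ i, c i * c i = ∑ i, v i * v i := by
    have h := B.sum_inner_mul_inner v v
    have h2 : ∀ i, (inner ℝ v (B i) : ℝ) * inner ℝ (B i) v = c i * c i := by
      intro i
      rw [real_inner_comm (B i) v, euclid_inner (B i) v, hc]
    rw [Finset.sum_congr rfl fun i _ => h2 i] at h
    rw [h, euclid_inner v v]
  have hBiS : ∀ i, (inner ℝ (B i : EuclideanSpace ℝ (Fin N))
      (WithLp.toLp 2 (S *ᵥ (v : Fin N → ℝ)) : EuclideanSpace ℝ (Fin N)) : ℝ) = μ i * c i := by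
    intro i
    rw [euclid_inner]
    have h1 := hswapS (B i) v
    rw [h1, hBev i]
    have : ∀ k, (μ i • ((B i : EuclideanSpace ℝ (Fin N)) : Fin N → ℝ)) k * v k
        = μ i * ((B i : EuclideanSpace ℝ (Fin N)) k * v k) := by
      intro k; simp [Pi.smul_apply, smul_eq_mul]; ring
    rw [Finset.sum_congr rfl fun k _ => this k, ← Finset.mul_sum]
  have hParF2 : ∑ i, μ i * (c i * c i) = ∑ i, v i * (S *ᵥ (v : Fin N → ℝ)) i := by
    have h := B.sum_inner_mul_inner v
      (WithLp.toLp 2 (S *ᵥ (v : Fin N → ℝ)) : EuclideanSpace ℝ (Fin N))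
    have h2 : ∀ i, (inner ℝ v (B i) : ℝ) * inner ℝ (B i)
        (WithLp.toLp 2 (S *ᵥ (v : Fin N → ℝ)) : EuclideanSpace ℝ (Fin N)) = μ i * (c i * c i) := by
      intro i
      rw [real_inner_comm (B i) v, euclid_inner (B i) v, hBiS i, hc]
      ring
    rw [Finset.sum_congr rfl fun i _ => h2 i] at h
    rw [h, euclid_inner]
  have hczero : ∀ i, μ i = 0 → c i = 0 := by
    intro i hμi
    have hker : S *ᵥ (B i : EuclideanSpace ℝ (Fin N)) = 0 := by
      rw [hBev i, hμi, zero_smul]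
    have hconst := hkernel _ hker
    have i0 : Fin N := ⟨0, by omega⟩
    have : c i = (B i : EuclideanSpace ℝ (Fin N)) i0 * ∑ k, v k := by
      rw [hc]
      simp only
      rw [Finset.mul_sum]
      exact Finset.sum_congr rfl fun k _ => by rw [hconst k i0]
    rw [this, hv, mul_zero]
  have hle : ∀ i, lam2 * (c i * c i) ≤ μ i * (c i * c i) := by
    intro i
    by_cases hμi : μ i = 0
    · rw [hczero i hμi, hμi]; simp
    · have hBne : (B i : EuclideanSpace ℝ (Fin N)) ≠ 0 := B.orthonormal.ne_zero i
      have hμspec : μ i ∈ spectrum ℝ S := hspec_of_eig (μ i) (B i) (fun h => hBne (by ext k; simpa using congrFun h k)) (hBev i)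
      have : lam2 ≤ μ i := hlb ⟨hμi, hμspec⟩
      exact mul_le_mul_of_nonneg_right this (mul_self_nonneg _)
  calc lam2 * (∑ i, v i * v i) = ∑ i, lam2 * (c i * c i) := by
        rw [← hParF1, Finset.mul_sum]
    _ ≤ ∑ i, μ i * (c i * c i) := Finset.sum_le_sum fun i _ => hle i
    _ = ∑ i, v i * (S *ᵥ (v : Fin N → ℝ)) i := hParF2
    _ = ∑ i, v i * (L *ᵥ (v : Fin N → ℝ)) i := hsym v

set_option maxHeartbeats 1000000 in
/-- practical tracking of the continuous-time dynamic average consensus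
algorithm `ẋ = -β L x + ṙ` over an SCWB digraph without delay. -/
theorem statement0 {N : ℕ} (hN : 2 ≤ N)
    (A L : Matrix (Fin N) (Fin N) ℝ)
    (hA : IsAdjacencyMatrix A) (hL : IsOutLaplacian A L)
    (hSC : IsStronglyConnected A) (hWB : IsWeightBalanced L)
    (β γ : ℝ) (hβ : 0 < β) (hγ : 0 ≤ γ)
    (lam2 : ℝ)
    (hlam2 : IsLeast {μ : ℝ | μ ≠ 0 ∧ μ ∈ spectrum ℝ ((2:ℝ)⁻¹ • (L + Lᵀ))} lam2)
    (r x r' x' : ℝ → EuclideanSpace ℝ (Fin N))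
    (hr : ∀ t ≥ (0:ℝ), HasDerivWithinAt r (r' t) (Set.Ici 0) t)
    (hx : ∀ t ≥ (0:ℝ), HasDerivWithinAt x (x' t) (Set.Ici 0) t)
    (hrbound : ∀ t ≥ (0:ℝ), ‖proj (r' t)‖ ≤ γ)
    (hdyn : ∀ t ≥ (0:ℝ), x' t = -β • (Matrix.toEuclideanLin L (x t)) + r' t)
    (hinit : ∑ i, (x 0 i - r 0 i) = 0) :
    (∃ C : ℝ, ∀ t ≥ (0:ℝ), ‖x t - avg (r t) • ones N‖ ≤ C) ∧
    ∀ i : Fin N,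
      Filter.limsup (fun t => |x t i - avg (r t)|) Filter.atTop ≤ γ / (β * lam2) := by
  obtain ⟨hlam2pos, hquad⟩ := spectral_key hN A L hA hL hSC hWB lam2 hlam2
  set a : ℝ := β * lam2 with ha
  have hapos : 0 < a := mul_pos hβ hlam2pos
  have hNpos : (0:ℝ) < N := by
    have : (0:ℕ) < N := by omega
    exact_mod_cast this
  -- row sums of L vanish
  have hrowsum : ∀ i, ∑ j, L i j = 0 := by
    intro i
    rw [Finset.sum_congr rfl fun j _ => lap_entry hA hL i j, Finset.sum_sub_distrib,
      Finset.sum_ite_eq]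
    simp
  -- column sums of L applied to a vector vanish
  have hcolsumL : ∀ w : Fin N → ℝ, ∑ i, (L *ᵥ w) i = 0 := by
    intro w
    have h1 : ∑ i, (L *ᵥ w) i = ∑ j, (∑ i, L i j) * w j := by
      simp only [Matrix.mulVec, dotProduct]
      rw [Finset.sum_comm]
      exact Finset.sum_congr rfl fun j _ => by rw [Finset.sum_mul]
    rw [h1]
    have h2 : ∀ j : Fin N, (∑ i, L i j) * w j = 0 := fun j => by rw [hWB j, zero_mul]
    rw [Finset.sum_congr rfl fun j _ => h2 j]
    exact Finset.sum_const_zero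
  have hLones : ∀ c : ℝ, L *ᵥ (fun _ => c : Fin N → ℝ) = 0 := by
    intro c
    funext i
    simp only [Matrix.mulVec, dotProduct, Pi.zero_apply]
    rw [← Finset.sum_mul, hrowsum i, zero_mul]
  have htoE : ∀ v : EuclideanSpace ℝ (Fin N), Matrix.toEuclideanLin L v
      = (WithLp.toLp 2 (L *ᵥ (v : Fin N → ℝ)) : EuclideanSpace ℝ (Fin N)) := fun v => rfl
  -- the error trajectory and its derivative
  set e : ℝ → EuclideanSpace ℝ (Fin N) := fun t => x t - avg (r t) • ones N with he
  set E' : ℝ → EuclideanSpace ℝ (Fin N) := fun t => x' t - avg (r' t) • ones N with hE'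
  -- avg as a continuous linear map
  set F : EuclideanSpace ℝ (Fin N) →L[ℝ] ℝ := (N:ℝ)⁻¹ • innerSL ℝ (ones N) with hF
  have hFavg : ∀ v : EuclideanSpace ℝ (Fin N), F v = avg v := by
    intro v
    simp only [hF, ContinuousLinearMap.smul_apply, innerSL_apply_apply, smul_eq_mul]
    rw [euclid_inner]
    simp only [ones, one_mul, avg]
    rw [div_eq_inv_mul]
  have havgd : ∀ t ∈ Set.Ici (0:ℝ), HasDerivWithinAt (fun s => avg (r s)) (avg (r' t))
      (Set.Ici 0) t := by
    intro t ht
    have h := (F.hasFDerivAt (x := r t)).comp_hasDerivWithinAt t (hr t ht)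
    have h2 : (F ∘ r) = fun s => avg (r s) := funext fun s => hFavg (r s)
    rw [h2, hFavg] at h
    exact h
  have hederiv : ∀ t ∈ Set.Ici (0:ℝ), HasDerivWithinAt e (E' t) (Set.Ici 0) t := by
    intro t ht
    exact (hx t ht).sub (((havgd t ht)).smul_const (ones N))
  -- conservation of the sum
  have hsum : ∀ t ∈ Set.Ici (0:ℝ), ∑ i, (x t i - r t i) = 0 := by
    set G : EuclideanSpace ℝ (Fin N) →L[ℝ] ℝ := innerSL ℝ (ones N) with hG
    have hGsum : ∀ v : EuclideanSpace ℝ (Fin N), G v = ∑ i, v i := by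
      intro v
      simp only [hG, innerSL_apply_apply]
      rw [euclid_inner]
      simp [ones]
    have hsderiv : ∀ t ∈ Set.Ici (0:ℝ),
        HasDerivWithinAt (fun s => G (x s - r s)) 0 (Set.Ici 0) t := by
      intro t ht
      have h := (G.hasFDerivAt (x := x t - r t)).comp_hasDerivWithinAt t
        ((hx t ht).sub (hr t ht))
      have h2 : G (x' t - r' t) = 0 := by
        rw [hGsum, hdyn t ht]
        have h3 : ∀ i, ((-β • (Matrix.toEuclideanLin L (x t)) + r' t) - r' t) i
            = -β * (L *ᵥ (x t : Fin N → ℝ)) i := by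
          intro i
          rw [htoE (x t)]
          simp [smul_eq_mul]
        rw [Finset.sum_congr rfl fun i _ => h3 i, ← Finset.mul_sum, hcolsumL, mul_zero]
      have h' := h
      rw [h2] at h'
      exact h'
    intro t ht
    have hconst := constant_of_has_deriv_right_zero
      (f := fun s => G (x s - r s)) (a := 0) (b := t)
      (fun s hs => ((hsderiv s hs.1).continuousWithinAt).mono
        (Set.Icc_subset_Ici_self))
      (fun s hs => ((hsderiv s hs.1).mono (Set.Ici_subset_Ici.mpr hs.1)))
      t ⟨ht, le_refl t⟩
    have h0 : G (x 0 - r 0) = 0 := by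
      rw [hGsum]
      simpa using hinit
    have hconst' : G (x t - r t) = G (x 0 - r 0) := hconst
    rw [h0] at hconst'
    have := hGsum (x t - r t)
    rw [hconst'] at this
    have h4 : ∀ i, (x t - r t : EuclideanSpace ℝ (Fin N)) i = x t i - r t i := fun i => rfl
    rw [Finset.sum_congr rfl fun i _ => h4 i] at this
    exact this.symm
  -- entries of e sum to zero
  have hesum : ∀ t ∈ Set.Ici (0:ℝ), ∑ i, e t i = 0 := by
    intro t ht
    have h1 : ∀ i, e t i = (x t i - r t i) + (r t i - avg (r t)) := by
      intro i
      simp only [he]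
      have : (x t - avg (r t) • ones N : EuclideanSpace ℝ (Fin N)) i
          = x t i - avg (r t) * 1 := rfl
      rw [this]
      ring
    rw [Finset.sum_congr rfl fun i _ => h1 i, Finset.sum_add_distrib, hsum t ht, zero_add,
      Finset.sum_sub_distrib]
    simp only [Finset.sum_const, Finset.card_univ, Fintype.card_fin, nsmul_eq_mul]
    rw [avg, mul_div_cancel₀ _ (ne_of_gt hNpos)]
    ring
  -- formula for E'
  have hEform : ∀ t ∈ Set.Ici (0:ℝ),
      E' t = -β • (Matrix.toEuclideanLin L (e t)) + proj (r' t) := by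
    intro t ht
    have hxe : L *ᵥ (x t : Fin N → ℝ) = L *ᵥ (e t : Fin N → ℝ) := by
      funext i
      simp only [Matrix.mulVec, dotProduct]
      have hterm : ∀ j, L i j * x t j - L i j * e t j = L i j * avg (r t) := by
        intro j
        have hj : e t j = x t j - avg (r t) * 1 := rfl
        rw [hj]; ring
      have hsub : ∑ j, L i j * x t j - ∑ j, L i j * e t j = (∑ j, L i j) * avg (r t) := by
        rw [← Finset.sum_sub_distrib, Finset.sum_mul]
        exact Finset.sum_congr rfl fun j _ => hterm j
      rw [hrowsum i, zero_mul] at hsub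
      linarith
    have h2 : Matrix.toEuclideanLin L (x t) = Matrix.toEuclideanLin L (e t) := by
      rw [htoE (x t), htoE (e t)]
      exact congrArg (WithLp.toLp 2) hxe
    have h0 : E' t = x' t - avg (r' t) • ones N := rfl
    rw [h0, hdyn t ht, h2]
    simp only [proj]
    abel
  -- the key inner ℝ product inequality
  have hkey : ∀ t ∈ Set.Ici (0:ℝ), (inner ℝ (e t) (E' t) : ℝ) ≤ -a * ‖e t‖^2 + γ * ‖e t‖ := by
    intro t ht
    rw [hEform t ht, inner_add_right, real_inner_smul_right]
    have h1 : (inner ℝ (e t) (Matrix.toEuclideanLin L (e t)) : ℝ)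
        = ∑ i, e t i * (L *ᵥ (e t : Fin N → ℝ)) i := by
      rw [htoE (e t)]
      exact euclid_inner _ _
    have h2 := hquad (e t) (hesum t ht)
    have h3 : ∑ i, e t i * e t i = ‖e t‖^2 := by
      rw [← real_inner_self_eq_norm_sq, euclid_inner]
    have h4 : (inner ℝ (e t) (proj (r' t)) : ℝ) ≤ γ * ‖e t‖ := by
      calc (inner ℝ (e t) (proj (r' t)) : ℝ) ≤ ‖e t‖ * ‖proj (r' t)‖ := real_inner_le_norm _ _
        _ ≤ ‖e t‖ * γ := mul_le_mul_of_nonneg_left (hrbound t ht) (norm_nonneg _)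
        _ = γ * ‖e t‖ := mul_comm _ _
    have h5 : β * (lam2 * ‖e t‖^2) ≤ β * ∑ i, e t i * (L *ᵥ (e t : Fin N → ℝ)) i := by
      apply mul_le_mul_of_nonneg_left _ hβ.le
      rw [← h3]
      exact h2
    rw [h1, ha]
    linarith [h4, h5]
  -- continuity of e
  have hcont : ContinuousOn e (Set.Ici 0) := fun t ht => (hederiv t ht).continuousWithinAt
  -- Gronwall estimate
  set δ : ℝ := ‖e 0‖ with hδ
  have hbnd : ∀ t ≥ (0:ℝ), ‖e t‖ ≤ δ * Real.exp (-a*t) + γ/a * (1 - Real.exp (-a*t)) := by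
    intro T hT
    have hmain := le_gronwallBound_of_liminf_deriv_right_le
      (f := fun t => ‖e t‖) (f' := fun t => -a * ‖e t‖ + γ) (δ := δ) (K := -a) (ε := γ)
      (a := 0) (b := T)
      (continuous_norm.comp_continuousOn (hcont.mono Set.Icc_subset_Ici_self))
      ?_ (le_refl δ) (fun s _ => le_refl _) T ⟨hT, le_refl T⟩
    · rw [gronwallBound_of_K_ne_0 (neg_ne_zero.mpr (ne_of_gt hapos))] at hmain
      simp only [sub_zero] at hmain
      have heq : γ / (-a) * (Real.exp (-a*T) - 1) = γ/a * (1 - Real.exp (-a*T)) := by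
        rw [div_neg]; ring
      rw [mul_comm (-a) T] at hmain
      rw [← heq]
      convert hmain using 3 <;> ring
    · intro s hs rr hrr0
      have hrr : -a * ‖e s‖ + γ < rr := hrr0
      have hs0 : (0:ℝ) ≤ s := hs.1
      have hE : HasDerivWithinAt e (E' s) (Set.Ici s) s :=
        (hederiv s hs0).mono (Set.Ici_subset_Ici.mpr hs0)
      by_cases hz : e s = 0
      · have h1 : ‖E' s‖ < rr := by
          have h2 : E' s = proj (r' s) := by
            rw [hEform s hs0, hz]
            simp
          rw [h2]
          have := hrbound s hs0
          have h3 : ‖e s‖ = 0 := by rw [hz, norm_zero]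
          rw [h3] at hrr
          linarith
        exact hE.liminf_right_slope_norm_le h1
      · have hne : ‖e s‖ ≠ 0 := norm_ne_zero_iff.mpr hz
        have hnp : 0 < ‖e s‖ := lt_of_le_of_ne (norm_nonneg _) (Ne.symm hne)
        have hgderiv : HasDerivWithinAt (fun z => (inner ℝ (e z) (e z) : ℝ))
            ((inner ℝ (e s) (E' s) : ℝ) + inner ℝ (E' s) (e s)) (Set.Ici s) s :=
          HasDerivWithinAt.inner ℝ hE hE
        have hinne : (inner ℝ (e s) (e s) : ℝ) ≠ 0 := by
          rw [real_inner_self_eq_norm_sq]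
          positivity
        have hsq := Real.hasDerivAt_sqrt hinne
        have hcomp := hsq.comp_hasDerivWithinAt s hgderiv
        have hfun : (Real.sqrt ∘ fun z => (inner ℝ (e z) (e z) : ℝ)) = fun z => ‖e z‖ := by
          funext z
          show Real.sqrt (inner ℝ (e z) (e z) : ℝ) = ‖e z‖
          rw [real_inner_self_eq_norm_sq, Real.sqrt_sq (norm_nonneg _)]
        have hval : 1/(2*Real.sqrt (inner ℝ (e s) (e s) : ℝ))
            * ((inner ℝ (e s) (E' s) : ℝ) + inner ℝ (E' s) (e s))
            = (inner ℝ (e s) (E' s) : ℝ) / ‖e s‖ := by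
          rw [real_inner_comm (e s) (E' s)]
          rw [real_inner_self_eq_norm_sq, Real.sqrt_sq (norm_nonneg _)]
          field_simp
          ring
        rw [hfun, hval] at hcomp
        have hd : (inner ℝ (e s) (E' s) : ℝ) / ‖e s‖ < rr := by
          have hk := hkey s hs0
          have h6 : (inner ℝ (e s) (E' s) : ℝ) / ‖e s‖ ≤ -a * ‖e s‖ + γ := by
            rw [div_le_iff₀ hnp]
            linarith [hk]
          linarith
        have htend := hasDerivWithinAt_iff_tendsto_slope.mp hcomp
        rw [Set.Ici_sdiff_left] at htend
        have hev := htend.eventually_lt_const hd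
        refine hev.frequently.mono fun z hz => ?_
        simpa [slope_def_field, div_eq_inv_mul] using hz
  -- conclusion
  have hcoord : ∀ (v : EuclideanSpace ℝ (Fin N)) (i : Fin N), |v i| ≤ ‖v‖ := by
    intro v i
    rw [EuclideanSpace.norm_eq]
    have h1 : |v i| = Real.sqrt (‖v i‖^2) := by
      rw [Real.sqrt_sq (norm_nonneg _), Real.norm_eq_abs]
    rw [h1]
    apply Real.sqrt_le_sqrt
    exact Finset.single_le_sum (f := fun j => ‖v j‖^2) (fun j _ => sq_nonneg _)
      (Finset.mem_univ i)
  have hδ0 : 0 ≤ δ := norm_nonneg _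
  have hγa : 0 ≤ γ/a := div_nonneg hγ hapos.le
  constructor
  · refine ⟨δ + γ/a, fun t ht => ?_⟩
    have h := hbnd t ht
    have hexp : 0 < Real.exp (-a*t) := Real.exp_pos _
    have hexp1 : Real.exp (-a*t) ≤ 1 := by
      rw [Real.exp_le_one_iff]
      have : 0 ≤ a * t := mul_nonneg hapos.le ht
      linarith
    have hgoal : ‖x t - avg (r t) • ones N‖ = ‖e t‖ := rfl
    rw [hgoal]
    nlinarith [mul_nonneg hδ0 (sub_nonneg.mpr hexp1), mul_nonneg hγa hexp.le]
  · intro i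
    have hacob : IsCoboundedUnder (· ≤ ·) atTop (fun t => |x t i - avg (r t)|) :=
      isCoboundedUnder_le_of_eventually_le atTop (x := 0)
        (Filter.Eventually.of_forall fun t => abs_nonneg _)
    refine le_of_forall_pos_le_add fun ε hε => ?_
    apply Filter.limsup_le_of_le hacob
    have h1 : Tendsto (fun t : ℝ => δ * Real.exp (-a*t)) atTop (nhds 0) := by
      have h2 : Tendsto (fun t : ℝ => -a*t) atTop atBot := by
        have h2a : Tendsto (fun t : ℝ => a * t) atTop atTop :=
          Filter.Tendsto.const_mul_atTop hapos tendsto_id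
        have h2b := tendsto_neg_atTop_atBot.comp h2a
        have h2c : (Neg.neg ∘ fun t : ℝ => a * t) = fun t : ℝ => -a*t := by
          funext t; simp [Function.comp]
        rwa [h2c] at h2b
      have h3 := Real.tendsto_exp_atBot.comp h2
      have h4 := h3.const_mul δ
      simpa using h4
    have hev1 := h1.eventually_lt_const hε
    filter_upwards [hev1, eventually_ge_atTop (0:ℝ)] with t h1t h0t
    have h := hbnd t h0t
    have hexp : 0 < Real.exp (-a*t) := Real.exp_pos _
    have hexp1 : Real.exp (-a*t) ≤ 1 := by
      rw [Real.exp_le_one_iff]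
      have : 0 ≤ a * t := mul_nonneg hapos.le h0t
      linarith
    have hci : |x t i - avg (r t)| ≤ ‖e t‖ := by
      have h5 : e t i = x t i - avg (r t) := by
        have : (x t - avg (r t) • ones N : EuclideanSpace ℝ (Fin N)) i
            = x t i - avg (r t) * 1 := rfl
        simp only [he, this]
        ring
      rw [← h5]
      exact hcoord (e t) i
    have hfin : γ / (β * lam2) = γ / a := by rw [ha]
    rw [hfin]
    nlinarith [mul_nonneg hγa hexp.le]
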